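/- If δ₁₁ = δ₂₂, the map h of the two-product self-social NCPM reduces to the affine map h(x) = x + δ₁₂ 1_n - 2δ₁₂ x + δ₁₁ diag(α)(Ã x - x), it has the fixed point p* = (1/2)1_n, and the matrix M = (1-2δ₁₂)I + δ₁₁ diag(α) Ã - δ₁₁ diag(α) satisfies ‖M‖_∞ < 1; hence p(t) → (1/2)1_n exponentially for any p(0) ∈ [0,1]^n under p(t+1) = h(p(t)). -/
import Mathlib


/-- The two-product self-social NCPM map `h`. -/
def mapH {n : ℕ} (δ11 δ12 δ21 δ22 : ℝ) (α : Fin n → ℝ)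
    (Atil : Matrix (Fin n) (Fin n) ℝ) (x : Fin n → ℝ) : Fin n → ℝ :=
  fun i => δ12 + (1 - δ12 - δ21) * x i + δ11 * α i * (∑ j, Atil i j * x j)
    - δ22 * α i * x i + (δ22 - δ11) * α i * x i * (∑ j, Atil i j * x j)

theorem stmt_14 (n : ℕ) (δ11 δ12 : ℝ)
    (h11 : 0 < δ11 ∧ δ11 < 1) (h12 : δ12 = 1 - δ11)
    (α : Fin n → ℝ) (hα : ∀ i, 0 < α i ∧ α i < 1)
    (Atil : Matrix (Fin n) (Fin n) ℝ)
    (hA0 : ∀ i j, 0 ≤ Atil i j) (hA1 : ∀ i, ∑ j, Atil i j = 1)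
    (hAdiag : ∀ i, Atil i i = 0)
    (M : Matrix (Fin n) (Fin n) ℝ)
    (hM : M = (1 - 2 * δ12) • (1 : Matrix (Fin n) (Fin n) ℝ)
      + δ11 • (Matrix.diagonal α * Atil) - δ11 • Matrix.diagonal α) :
    (∀ x : Fin n → ℝ, mapH δ11 δ12 δ12 δ11 α Atil x =
      fun i => δ12 + ∑ j, M i j * x j) ∧
    (mapH δ11 δ12 δ12 δ11 α Atil (fun _ => 1 / 2) = fun _ => 1 / 2) ∧
    (⨆ i, ∑ j, |M i j|) < 1 ∧
    (∀ p : ℕ → Fin n → ℝ, (∀ i, 0 ≤ p 0 i ∧ p 0 i ≤ 1) →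
      (∀ t, p (t + 1) = mapH δ11 δ12 δ12 δ11 α Atil (p t)) →
      ∃ C > (0 : ℝ), ∃ ξ : ℝ, 0 < ξ ∧ ξ < 1 ∧
        ∀ t, (⨆ i, |p t i - 1 / 2|) ≤ C * ξ ^ t) := by
  obtain ⟨hd0, hd1⟩ := h11
  -- entrywise formula for M
  have hMij : ∀ i j, M i j =
      (if j = i then (1 - 2*δ12) - δ11 * α i else 0) + δ11 * (α i * Atil i j) := by
    intro i j
    subst hM
    simp [Matrix.add_apply, Matrix.sub_apply, Matrix.one_apply, Matrix.diagonal_apply,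
      Matrix.diagonal_mul, eq_comm]
    split <;> ring
  -- part 1
  have part1 : ∀ x : Fin n → ℝ, mapH δ11 δ12 δ12 δ11 α Atil x =
      fun i => δ12 + ∑ j, M i j * x j := by
    intro x
    funext i
    have hsum : ∑ j, M i j * x j
        = ((1 - 2*δ12) - δ11 * α i) * x i + δ11 * α i * (∑ j, Atil i j * x j) := by
      have hterm : ∀ j, M i j * x j =
          (if j = i then ((1 - 2*δ12) - δ11 * α i) * x j else 0)
            + δ11 * α i * (Atil i j * x j) := by
        intro j; rw [hMij]; split <;> ring
      rw [Finset.sum_congr rfl (fun j _ => hterm j), Finset.sum_add_distrib,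
        Finset.sum_ite_eq' Finset.univ i, ← Finset.mul_sum]
      simp
    simp only [mapH, hsum]
    ring
  -- part 2
  have part2 : mapH δ11 δ12 δ12 δ11 α Atil (fun _ => 1 / 2) = fun _ => 1 / 2 := by
    funext i
    have : ∑ j, Atil i j * (1/2 : ℝ) = 1/2 := by
      rw [← Finset.sum_mul, hA1 i]; ring
    simp only [mapH, this]
    ring
  -- row sums
  have hrow : ∀ i, ∑ j, |M i j| = |(1 - 2*δ12) - δ11 * α i| + δ11 * α i := by
    intro i
    have h1 : ∑ j, |M i j|
        = |M i i| + ∑ j ∈ Finset.univ.erase i, |M i j| := by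
      rw [← Finset.add_sum_erase _ _ (Finset.mem_univ i)]
    have h2 : ∀ j ∈ Finset.univ.erase i, |M i j| = δ11 * (α i * Atil i j) := by
      intro j hj
      rw [hMij, if_neg (Finset.ne_of_mem_erase hj), zero_add, abs_of_nonneg]
      have := (hα i).1
      have := hA0 i j
      positivity
    have h3 : ∑ j ∈ Finset.univ.erase i, Atil i j = 1 := by
      have := Finset.add_sum_erase Finset.univ (Atil i) (Finset.mem_univ i)
      rw [hA1 i, hAdiag i, zero_add] at this
      linarith [this]
    rw [h1, Finset.sum_congr rfl h2, ← Finset.mul_sum, ← Finset.mul_sum, h3,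
      hMij, if_pos rfl, hAdiag i]
    norm_num
  have hrowlt : ∀ i, ∑ j, |M i j| < 1 := by
    intro i
    rw [hrow i]
    have hai := hα i
    rcases abs_cases ((1 - 2*δ12) - δ11 * α i) with ⟨he, _⟩ | ⟨he, _⟩ <;>
      rw [he] <;> nlinarith [hai.1, hai.2]
  refine ⟨part1, part2, ?_, ?_⟩
  · rcases Nat.eq_zero_or_pos n with hn | hn
    · subst hn
      simp [ciSup_of_empty]
    · have : Nonempty (Fin n) := ⟨⟨0, hn⟩⟩
      obtain ⟨i, hi⟩ := exists_eq_ciSup_of_finite (f := fun i => ∑ j, |M i j|)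
      rw [← hi]; exact hrowlt i
  · -- convergence
    intro p hp0 hrec
    rcases Nat.eq_zero_or_pos n with hn | hn
    · subst hn
      exact ⟨1, one_pos, 1/2, by norm_num, by norm_num, fun t => by
        simp [ciSup_of_empty]⟩
    haveI hne : Nonempty (Fin n) := ⟨⟨0, hn⟩⟩
    set ξ := ⨆ i, ∑ j, |M i j| with hξ
    have hbdd : BddAbove (Set.range fun i => ∑ j, |M i j|) :=
      Set.Finite.bddAbove (Set.finite_range _)
    have hrow_le : ∀ i, ∑ j, |M i j| ≤ ξ := fun i => le_ciSup hbdd i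
    have i0 : Fin n := ⟨0, hn⟩
    have hξpos : 0 < ξ := by
      refine lt_of_lt_of_le ?_ (hrow_le i0)
      rw [hrow i0]
      have := (hα i0).1
      positivity
    have hξlt : ξ < 1 := by
      obtain ⟨i, hi⟩ := exists_eq_ciSup_of_finite (f := fun i => ∑ j, |M i j|)
      rw [hξ, ← hi]; exact hrowlt i
    -- error dynamics
    set S : ℕ → ℝ := fun t => ⨆ i, |p t i - 1/2| with hS
    have hSbdd : ∀ t, BddAbove (Set.range fun i => |p t i - 1/2|) :=
      fun t => Set.Finite.bddAbove (Set.finite_range _)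
    have hS_le : ∀ t i, |p t i - 1/2| ≤ S t := fun t i => le_ciSup (hSbdd t) i
    have hSnonneg : ∀ t, 0 ≤ S t := fun t =>
      le_trans (abs_nonneg _) (hS_le t i0)
    have half_eq : ∀ i, (1/2 : ℝ) = δ12 + ∑ j, M i j * (1/2) := by
      intro i
      have h := part1 (fun _ => 1/2)
      rw [part2] at h
      exact congrFun h i
    have hstep : ∀ t i, p (t+1) i - 1/2 = ∑ j, M i j * (p t j - 1/2) := by
      intro t i
      have h1 : p (t+1) i = δ12 + ∑ j, M i j * p t j := by
        rw [hrec t, part1]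
      rw [h1]
      have h2 : ∑ j, M i j * (p t j - 1/2)
          = (∑ j, M i j * p t j) - ∑ j, M i j * (1/2) := by
        rw [← Finset.sum_sub_distrib]
        exact Finset.sum_congr rfl fun j _ => by ring
      rw [h2]
      linarith [half_eq i]
    have hSstep : ∀ t, S (t+1) ≤ ξ * S t := by
      intro t
      refine ciSup_le fun i => ?_
      rw [hstep t i]
      calc |∑ j, M i j * (p t j - 1/2)| ≤ ∑ j, |M i j * (p t j - 1/2)| :=
            Finset.abs_sum_le_sum_abs _ _
        _ ≤ ∑ j, |M i j| * S t := by
            refine Finset.sum_le_sum fun j _ => ?_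
            rw [abs_mul]
            exact mul_le_mul_of_nonneg_left (hS_le t j) (abs_nonneg _)
        _ = (∑ j, |M i j|) * S t := by rw [Finset.sum_mul]
        _ ≤ ξ * S t := mul_le_mul_of_nonneg_right (hrow_le i) (hSnonneg t)
    have hSt : ∀ t, S t ≤ S 0 * ξ ^ t := by
      intro t
      induction t with
      | zero => simp
      | succ t ih =>
        calc S (t+1) ≤ ξ * S t := hSstep t
          _ ≤ ξ * (S 0 * ξ ^ t) := mul_le_mul_of_nonneg_left ih (le_of_lt hξpos)
          _ = S 0 * ξ ^ (t+1) := by ring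
    refine ⟨S 0 + 1, by linarith [hSnonneg 0], ξ, hξpos, hξlt, fun t => ?_⟩
    calc S t ≤ S 0 * ξ ^ t := hSt t
      _ ≤ (S 0 + 1) * ξ ^ t := by
          have : (0:ℝ) < ξ ^ t := pow_pos hξpos t
          nlinarith
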